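/- arXiv:1604.01743 — 3 statements merged into one kernel-verified Lean document; each statement's English description precedes it below -/
import Mathlib

section
/- Let E be an AL-space and (T_t)_{t∈J} a Markov semigroup on E (J = ℕ or (0,∞)). Then (T_t) converges strongly as t → ∞ if and only if for every normalised f ∈ E₊ there exists a lower bound h_f for the orbit of f (i.e. ‖(T_t f − h_f)⁻‖ → 0) such that inf_f ‖h_f‖ > 0. -/
open Filter Topology

section Helpers

variable {E : Type*} [NormedAddCommGroup E] [Lattice E] [HasSolidNorm E] [IsOrderedAddMonoid E]

private lemma pow2_nsmul_nonneg {a : E} : ∀ k : ℕ, 0 ≤ (2 ^ k) • a → 0 ≤ a := by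
  intro k
  induction k with
  | zero => simpa using id
  | succ k ih =>
      intro h
      apply ih
      apply nsmul_two_semiclosed
      have h2 : (2:ℕ) • (2 ^ k) • a = (2 ^ (k+1)) • a := by
        rw [smul_smul, pow_succ, Nat.mul_comm]
      rw [h2]
      exact h

private lemma norm_mono_nonneg {a b : E} (ha : 0 ≤ a) (hab : a ≤ b) : ‖a‖ ≤ ‖b‖ := by
  have hb : 0 ≤ b := ha.trans hab
  exact HasSolidNorm.solid (by rwa [abs_of_nonneg ha, abs_of_nonneg hb])

variable [NormedSpace ℝ E]

private lemma smul_nonneg'' {c : ℝ} (hc : 0 ≤ c) {x : E} (hx : 0 ≤ x) : 0 ≤ c • x := by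
  -- dyadic approximation from above
  have key : ∀ k : ℕ, 0 ≤ ((⌈c * 2 ^ k⌉₊ : ℝ) / 2 ^ k) • x := by
    intro k
    apply pow2_nsmul_nonneg (k := k)
    have h2 : ((2:ℝ) ^ k) • (((⌈c * 2 ^ k⌉₊ : ℝ) / 2 ^ k) • x) = (⌈c * 2 ^ k⌉₊ : ℕ) • x := by
      rw [smul_smul, mul_div_cancel₀ _ (by positivity), ← Nat.cast_smul_eq_nsmul ℝ]
    have h3 : ((2:ℝ) ^ k) • (((⌈c * 2 ^ k⌉₊ : ℝ) / 2 ^ k) • x) = (2 ^ k : ℕ) • (((⌈c * 2 ^ k⌉₊ : ℝ) / 2 ^ k) • x) := by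
      rw [← Nat.cast_smul_eq_nsmul ℝ]; norm_num
    rw [← h3, h2]
    exact nsmul_nonneg hx _
  have hlim : Tendsto (fun k : ℕ => ((⌈c * 2 ^ k⌉₊ : ℝ) / 2 ^ k)) atTop (𝓝 c) := by
    have hle : ∀ k : ℕ, c ≤ (⌈c * 2 ^ k⌉₊ : ℝ) / 2 ^ k := by
      intro k
      rw [le_div_iff₀ (by positivity)]
      exact Nat.le_ceil _
    have hlt : ∀ k : ℕ, (⌈c * 2 ^ k⌉₊ : ℝ) / 2 ^ k ≤ c + (1/2) ^ k := by
      intro k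
      rw [div_le_iff₀ (by positivity)]
      have := Nat.ceil_lt_add_one (a := c * 2 ^ k) (by positivity)
      have h2 : (c + (1/2:ℝ) ^ k) * 2 ^ k = c * 2 ^ k + 1 := by
        rw [add_mul]; congr 1
        rw [← mul_pow]; norm_num
      rw [h2]
      linarith
    have h1 : Tendsto (fun k : ℕ => c + (1/2:ℝ) ^ k) atTop (𝓝 (c + 0)) :=
      tendsto_const_nhds.add (tendsto_pow_atTop_nhds_zero_of_lt_one (by norm_num) (by norm_num))
    rw [add_zero] at h1
    exact tendsto_of_tendsto_of_tendsto_of_le_of_le tendsto_const_nhds h1 hle hlt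
  have : Tendsto (fun k : ℕ => ((⌈c * 2 ^ k⌉₊ : ℝ) / 2 ^ k) • x) atTop (𝓝 (c • x)) :=
    hlim.smul_const x
  exact ge_of_tendsto this (Eventually.of_forall key)

private lemma smul_mono' {c : ℝ} (hc : 0 ≤ c) {x y : E} (hxy : x ≤ y) : c • x ≤ c • y := by
  have := smul_nonneg'' hc (sub_nonneg.2 hxy)
  rwa [smul_sub, sub_nonneg] at this

private lemma smul_sup' {c : ℝ} (hc : 0 < c) (a b : E) : c • (a ⊔ b) = c • a ⊔ c • b := by
  apply le_antisymm
  · have h1 : a ≤ c⁻¹ • (c • a ⊔ c • b) := by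
      have := smul_mono' (le_of_lt (inv_pos.2 hc)) (le_sup_left : c • a ≤ c • a ⊔ c • b)
      rwa [inv_smul_smul₀ hc.ne'] at this
    have h2 : b ≤ c⁻¹ • (c • a ⊔ c • b) := by
      have := smul_mono' (le_of_lt (inv_pos.2 hc)) (le_sup_right : c • b ≤ c • a ⊔ c • b)
      rwa [inv_smul_smul₀ hc.ne'] at this
    have h3 := smul_mono' hc.le (sup_le h1 h2)
    rwa [smul_inv_smul₀ hc.ne'] at h3
  · exact sup_le (smul_mono' hc.le le_sup_left) (smul_mono' hc.le le_sup_right)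

private lemma negPart_smul' {c : ℝ} (hc : 0 ≤ c) (x : E) : (c • x)⁻ = c • x⁻ := by
  rcases hc.eq_or_lt with h | h
  · simp [← h]
  · rw [negPart_def, negPart_def, ← smul_neg, smul_sup' h, smul_zero]

private lemma negPart_add_le' (x y : E) : (x + y)⁻ ≤ x⁻ + y⁻ := by
  rw [negPart_def]
  refine sup_le ?_ (add_nonneg (negPart_nonneg x) (negPart_nonneg y))
  rw [neg_add]
  exact add_le_add (neg_le_negPart x) (neg_le_negPart y)

private lemma negPart_sub_sup_le' (x a b : E) : (x - a ⊔ b)⁻ ≤ (x - a)⁻ + (x - b)⁻ := by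
  have h : x - a ⊔ b = (x - a) ⊓ (x - b) := sub_sup a b x
  rw [h, negPart_def, neg_inf]
  refine sup_le (sup_le ?_ ?_) (add_nonneg (negPart_nonneg _) (negPart_nonneg _))
  · exact le_add_of_le_of_nonneg (neg_le_negPart _) (negPart_nonneg _)
  · exact le_add_of_nonneg_of_le (negPart_nonneg _) (neg_le_negPart _)

private lemma norm_negPart_sub_le' (a b : E) : ‖a⁻ - b⁻‖ ≤ ‖a - b‖ := by
  have := (lipschitzWith_negPart (α := E)).dist_le_mul a b
  simpa [dist_eq_norm] using this

/-- positive operators are monotone -/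
private lemma op_mono {S : E →L[ℝ] E} (hS : ∀ x : E, 0 ≤ x → 0 ≤ S x) {x y : E} (h : x ≤ y) :
    S x ≤ S y := by
  have := hS _ (sub_nonneg.2 h)
  rwa [map_sub, sub_nonneg] at this

private lemma op_negPart_le {S : E →L[ℝ] E} (hS : ∀ x : E, 0 ≤ x → 0 ≤ S x) (x : E) :
    (S x)⁻ ≤ S x⁻ := by
  rw [negPart_def]
  refine sup_le ?_ (hS _ (negPart_nonneg x))
  rw [← map_neg]
  exact op_mono hS (neg_le_negPart x)

private lemma op_norm_le {S : E →L[ℝ] E} (hS : ∀ x : E, 0 ≤ x → 0 ≤ S x)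
    (hM : ∀ x : E, 0 ≤ x → ‖S x‖ = ‖x‖) (x : E) : ‖S x‖ ≤ ‖x‖ := by
  have habs : |S x| ≤ S |x| := by
    refine abs_le'.2 ⟨op_mono hS (le_abs_self x), ?_⟩
    rw [← map_neg]
    exact op_mono hS (neg_le_abs x)
  calc ‖S x‖ = ‖|S x|‖ := (norm_abs_eq_norm _).symm
    _ ≤ ‖S |x|‖ := norm_mono_nonneg (abs_nonneg _) habs
    _ = ‖|x|‖ := hM _ (abs_nonneg x)
    _ = ‖x‖ := norm_abs_eq_norm x

end Helpers
section ALHelpers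

variable {E : Type*} [NormedAddCommGroup E] [Lattice E] [HasSolidNorm E] [IsOrderedAddMonoid E] [NormedSpace ℝ E]

private lemma norm_sub_of_le' (hAL : ∀ f g : E, 0 ≤ f → 0 ≤ g → ‖f + g‖ = ‖f‖ + ‖g‖)
    {a b : E} (ha : 0 ≤ a) (hab : a ≤ b) : ‖b - a‖ = ‖b‖ - ‖a‖ := by
  have h := hAL (b - a) a (sub_nonneg.2 hab) ha
  rw [sub_add_cancel] at h
  linarith

private lemma phi_eq (hAL : ∀ f g : E, 0 ≤ f → 0 ≤ g → ‖f + g‖ = ‖f‖ + ‖g‖)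
    (a b : E) (ha : 0 ≤ a) (hb : 0 ≤ b) :
    ‖(a - b)⁺‖ + ‖b‖ = ‖(a - b)⁻‖ + ‖a‖ := by
  have h2 := posPart_sub_negPart (a - b)
  rw [sub_eq_iff_eq_add] at h2
  have h3 : (a - b)⁺ + b = (a - b)⁻ + a := by rw [h2]; abel
  calc ‖(a - b)⁺‖ + ‖b‖ = ‖(a - b)⁺ + b‖ := (hAL _ _ (posPart_nonneg _) hb).symm
    _ = ‖(a - b)⁻ + a‖ := by rw [h3]
    _ = ‖(a - b)⁻‖ + ‖a‖ := hAL _ _ (negPart_nonneg _) ha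

variable [CompleteSpace E]

private lemma exists_tendsto_monotone (hAL : ∀ f g : E, 0 ≤ f → 0 ≤ g → ‖f + g‖ = ‖f‖ + ‖g‖)
    {H : ℕ → E} (h0 : ∀ n, 0 ≤ H n) (hm : Monotone H)
    {C : ℝ} (hC : ∀ n, ‖H n‖ ≤ C) : ∃ x, Filter.Tendsto H Filter.atTop (nhds x) := by
  have hnm : Monotone fun n => ‖H n‖ := fun i j hij => norm_mono_nonneg (h0 i) (hm hij)
  have hcauchy : CauchySeq fun n => ‖H n‖ := by
    have := tendsto_atTop_ciSup hnm ⟨C, by rintro r ⟨n, rfl⟩; exact hC n⟩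
    exact this.cauchySeq
  have hkey : ∀ m n : ℕ, dist (H m) (H n) = dist ‖H m‖ ‖H n‖ := by
    intro m n
    rcases le_total m n with h | h
    · rw [dist_comm, dist_comm ‖H m‖, dist_eq_norm,
        norm_sub_of_le' hAL (h0 m) (hm h), Real.dist_eq,
        abs_of_nonneg (sub_nonneg.2 (hnm h))]
    · rw [dist_eq_norm, norm_sub_of_le' hAL (h0 n) (hm h), Real.dist_eq,
        abs_of_nonneg (sub_nonneg.2 (hnm h))]
  have hcs : CauchySeq H := by
    rw [Metric.cauchySeq_iff]
    intro δ hδ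
    obtain ⟨N, hN⟩ := Metric.cauchySeq_iff.1 hcauchy δ hδ
    exact ⟨N, fun m hm' n hn' => by rw [hkey]; exact hN m hm' n hn'⟩
  exact cauchySeq_tendsto_of_complete hcs

private lemma exists_tendsto_antitone (hAL : ∀ f g : E, 0 ≤ f → 0 ≤ g → ‖f + g‖ = ‖f‖ + ‖g‖)
    {H : ℕ → E} (h0 : ∀ n, 0 ≤ H n) (hm : Antitone H) :
    ∃ x, Filter.Tendsto H Filter.atTop (nhds x) := by
  have hnm : Antitone fun n => ‖H n‖ := fun i j hij => norm_mono_nonneg (h0 j) (hm hij)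
  have hcauchy : CauchySeq fun n => ‖H n‖ := by
    have := tendsto_atTop_ciInf hnm ⟨0, by rintro r ⟨n, rfl⟩; exact norm_nonneg _⟩
    exact this.cauchySeq
  have hkey : ∀ m n : ℕ, dist (H m) (H n) = dist ‖H m‖ ‖H n‖ := by
    intro m n
    rcases le_total m n with h | h
    · rw [dist_eq_norm, norm_sub_of_le' hAL (h0 n) (hm h), Real.dist_eq,
        abs_of_nonneg (sub_nonneg.2 (hnm h))]
    · rw [dist_comm, dist_comm ‖H m‖, dist_eq_norm,
        norm_sub_of_le' hAL (h0 m) (hm h), Real.dist_eq,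
        abs_of_nonneg (sub_nonneg.2 (hnm h))]
  have hcs : CauchySeq H := by
    rw [Metric.cauchySeq_iff]
    intro δ hδ
    obtain ⟨N, hN⟩ := Metric.cauchySeq_iff.1 hcauchy δ hδ
    exact ⟨N, fun m hm' n hn' => by rw [hkey]; exact hN m hm' n hn'⟩
  exact cauchySeq_tendsto_of_complete hcs

end ALHelpers

open Filter Topology

private lemma tendsto_zero_iff_ev {ι : Type*} [SemilatticeSup ι] [Nonempty ι] {g : ι → ℝ}
    (hg : ∀ t, 0 ≤ g t) :
    Tendsto g atTop (𝓝 0) ↔ ∀ η > (0:ℝ), ∀ᶠ t in atTop, g t ≤ η := by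
  constructor
  · intro h η hη
    exact (h.eventually_lt_const hη).mono fun t ht => ht.le
  · intro H
    rw [Metric.tendsto_nhds]
    intro η hη
    filter_upwards [H (η/2) (by linarith)] with t ht
    rw [Real.dist_eq, sub_zero, abs_of_nonneg (hg t)]
    linarith
section Core

variable {E : Type*} [NormedAddCommGroup E] [Lattice E] [HasSolidNorm E] [IsOrderedAddMonoid E] [NormedSpace ℝ E] [CompleteSpace E]
variable {ι : Type*} [SemilatticeSup ι] [Nonempty ι]

private theorem core_orbit
    (hAL : ∀ f g : E, 0 ≤ f → 0 ≤ g → ‖f + g‖ = ‖f‖ + ‖g‖)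
    (T : ι → E →L[ℝ] E) (Pr : ι → Prop)
    (hP : ∀ᶠ t in atTop, Pr t)
    (hsplit : ∀ s, Pr s → ∀ D : ι, ∀ᶠ t in atTop, ∃ d, Pr d ∧ D ≤ d ∧
        T t = (T d).comp (T s) ∧ T t = (T s).comp (T d))
    (hpos : ∀ t, Pr t → ∀ x : E, 0 ≤ x → 0 ≤ T t x)
    (hmark : ∀ t, Pr t → ∀ x : E, 0 ≤ x → ‖T t x‖ = ‖x‖)
    (ε : ℝ) (hε : 0 < ε)
    (hlb : ∀ f : E, 0 ≤ f → ‖f‖ = 1 → ∃ h : E, 0 ≤ h ∧ ε ≤ ‖h‖ ∧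
        Tendsto (fun t => ‖(T t f - h)⁻‖) atTop (𝓝 0))
    (f : E) (hf0 : 0 ≤ f) (hf1 : ‖f‖ = 1) :
    ∃ y, Tendsto (fun t => T t f) atTop (𝓝 y) := by
  have hA1 : ∀ᶠ t in atTop, ‖T t f‖ = 1 := hP.mono fun t ht => by rw [hmark t ht f hf0, hf1]
  set L : Set E := {h | 0 ≤ h ∧ Tendsto (fun t => ‖(T t f - h)⁻‖) atTop (𝓝 0)} with hLdef
  have hLiff : ∀ h : E, Tendsto (fun t => ‖(T t f - h)⁻‖) atTop (𝓝 0) ↔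
      ∀ η > (0:ℝ), ∀ᶠ t in atTop, ‖(T t f - h)⁻‖ ≤ η :=
    fun h => tendsto_zero_iff_ev fun t => norm_nonneg _
  have hL0 : (0:E) ∈ L := by
    refine ⟨le_refl 0, (hLiff 0).2 fun η hη => ?_⟩
    filter_upwards [hP] with t ht
    rw [sub_zero, negPart_eq_zero.2 (hpos t ht f hf0), norm_zero]
    exact hη.le
  have hbound : ∀ h : E, 0 ≤ h → ∀ r : ℝ,
      (∃ t, ‖T t f‖ = 1 ∧ ‖(T t f - h)⁻‖ ≤ r) → ‖h‖ ≤ 1 + r := by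
    rintro h h0 r ⟨t, ht1, ht2⟩
    have hle : h ≤ T t f + (T t f - h)⁻ := by
      have h1 : h - T t f ≤ (T t f - h)⁻ := by
        rw [negPart_def, neg_sub]; exact le_sup_left
      have := sub_le_iff_le_add.1 h1
      rwa [add_comm] at this
    calc ‖h‖ ≤ ‖T t f + (T t f - h)⁻‖ := norm_mono_nonneg h0 hle
      _ ≤ ‖T t f‖ + ‖(T t f - h)⁻‖ := norm_add_le _ _
      _ ≤ 1 + r := by rw [ht1]; linarith
  have hLnorm : ∀ h ∈ L, ‖h‖ ≤ 1 := by
    rintro h ⟨h0, hh⟩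
    refine le_of_forall_pos_le_add fun η hη => ?_
    exact hbound h h0 η (hA1.and ((hLiff h).1 hh η hη)).exists
  have hLsup : ∀ h₁ ∈ L, ∀ h₂ ∈ L, h₁ ⊔ h₂ ∈ L := by
    rintro h₁ ⟨h10, h1t⟩ h₂ ⟨h20, h2t⟩
    refine ⟨le_trans h10 le_sup_left, (hLiff _).2 fun η hη => ?_⟩
    filter_upwards [(hLiff h₁).1 h1t (η/2) (by linarith),
      (hLiff h₂).1 h2t (η/2) (by linarith)] with t u1 u2
    calc ‖(T t f - h₁ ⊔ h₂)⁻‖ ≤ ‖(T t f - h₁)⁻ + (T t f - h₂)⁻‖ :=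
          norm_mono_nonneg (negPart_nonneg _) (negPart_sub_sup_le' _ _ _)
      _ ≤ ‖(T t f - h₁)⁻‖ + ‖(T t f - h₂)⁻‖ := norm_add_le _ _
      _ ≤ η := by linarith
  have hLlip : ∀ (h h' : E) (t : ι), ‖(T t f - h')⁻‖ ≤ ‖(T t f - h)⁻‖ + ‖h - h'‖ := by
    intro h h' t
    have h1 : ‖(T t f - h')⁻ - (T t f - h)⁻‖ ≤ ‖h - h'‖ := by
      have h2 := norm_negPart_sub_le' (T t f - h') (T t f - h)
      have h3 : (T t f - h') - (T t f - h) = h - h' := by abel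
      rwa [h3] at h2
    have e1 : (T t f - h')⁻ = (T t f - h)⁻ + ((T t f - h')⁻ - (T t f - h)⁻) := by abel
    have h4 := norm_add_le ((T t f - h)⁻) ((T t f - h')⁻ - (T t f - h)⁻)
    rw [← e1] at h4
    linarith
  -- the supremum of norms over L
  set SN : Set ℝ := (fun h : E => ‖h‖) '' L with hSNdef
  have hSNne : SN.Nonempty := ⟨0, 0, hL0, norm_zero⟩
  have hSNbdd : BddAbove SN := ⟨1, by rintro r ⟨h, hh, rfl⟩; exact hLnorm h hh⟩
  set β := sSup SN with hβdef
  have hβ0 : (0:ℝ) ≤ β := le_csSup hSNbdd ⟨0, hL0, norm_zero⟩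
  have hβ1 : β ≤ 1 := csSup_le hSNne (by rintro r ⟨h, hh, rfl⟩; exact hLnorm h hh)
  have hseq : ∀ n : ℕ, ∃ h, h ∈ L ∧ β - 1/(n+1) < ‖h‖ := by
    intro n
    have hlt : β - 1/(n+1) < β := by
      have : (0:ℝ) < 1/(n+1) := by positivity
      linarith
    obtain ⟨r, ⟨h, hh, rfl⟩, hr⟩ := exists_lt_of_lt_csSup hSNne hlt
    exact ⟨h, hh, hr⟩
  choose hs hsL hsn using hseq
  set Hc : ℕ → E := fun n => Nat.rec (hs 0) (fun k ih => ih ⊔ hs (k + 1)) n with hHcdef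
  have hHcsucc : ∀ k, Hc (k+1) = Hc k ⊔ hs (k+1) := fun k => rfl
  have hHcL : ∀ n, Hc n ∈ L := by
    intro n
    induction n with
    | zero => exact hsL 0
    | succ k ih => exact hLsup _ ih _ (hsL (k+1))
  have hHcm : Monotone Hc := monotone_nat_of_le_succ fun n => le_sup_left
  have hHcge : ∀ n, ‖hs n‖ ≤ ‖Hc n‖ := by
    intro n
    cases n with
    | zero => exact le_refl _
    | succ k => exact norm_mono_nonneg (hsL (k+1)).1 le_sup_right
  obtain ⟨hstar, hstar_t⟩ := exists_tendsto_monotone hAL (fun n => (hHcL n).1) hHcm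
    (fun n => hLnorm _ (hHcL n))
  have hLclosed : ∀ (Hs : ℕ → E) (x : E), (∀ n, Hs n ∈ L) →
      Tendsto Hs atTop (𝓝 x) → x ∈ L := by
    intro Hs x hmem hx
    refine ⟨ge_of_tendsto hx (Eventually.of_forall fun n => (hmem n).1), (hLiff _).2 fun η hη => ?_⟩
    obtain ⟨N, hN⟩ := Metric.tendsto_atTop.1 hx (η/2) (by linarith)
    have hNd : ‖Hs N - x‖ ≤ η/2 := by
      have := hN N (le_refl N)
      rw [dist_eq_norm] at this
      linarith
    filter_upwards [(hLiff (Hs N)).1 (hmem N).2 (η/2) (by linarith)] with t ht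
    exact (hLlip (Hs N) x t).trans (by linarith)
  have hstarL : hstar ∈ L := hLclosed Hc hstar hHcL hstar_t
  have hstar_norm : ‖hstar‖ = β := by
    have h1 : Tendsto (fun n => ‖Hc n‖) atTop (𝓝 ‖hstar‖) := hstar_t.norm
    refine tendsto_nhds_unique h1 ?_
    have h2 : Tendsto (fun n : ℕ => β - 1/(n+1)) atTop (𝓝 (β - 0)) :=
      tendsto_const_nhds.sub tendsto_one_div_add_atTop_nhds_zero_nat
    rw [sub_zero] at h2
    refine tendsto_of_tendsto_of_tendsto_of_le_of_le h2 tendsto_const_nhds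
      (fun n => (le_of_lt (hsn n)).trans (hHcge n))
      (fun n => le_csSup hSNbdd ⟨Hc n, hHcL n, rfl⟩)
  have hstar_max : ∀ h ∈ L, h ≤ hstar := by
    intro h hh
    have hsup := hLsup h hh hstar hstarL
    have h1 : ‖h ⊔ hstar‖ ≤ β := le_csSup hSNbdd ⟨_, hsup, rfl⟩
    have h3 : ‖h ⊔ hstar - hstar‖ = ‖h ⊔ hstar‖ - ‖hstar‖ :=
      norm_sub_of_le' hAL hstarL.1 le_sup_right
    have h4 : h ⊔ hstar - hstar = 0 := by
      refine norm_le_zero_iff.1 ?_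
      rw [h3, hstar_norm]
      linarith
    rw [sub_eq_zero] at h4
    exact sup_eq_right.1 h4
  have hfix : ∀ σ, Pr σ → T σ hstar = hstar := by
    intro σ hσ
    have hmem : T σ hstar ∈ L := by
      refine ⟨hpos σ hσ _ hstarL.1, (hLiff _).2 fun η hη => ?_⟩
      obtain ⟨D, hD⟩ := eventually_atTop.1 ((hLiff hstar).1 hstarL.2 η hη)
      filter_upwards [hsplit σ hσ D] with t hsp
      obtain ⟨d, hd, hDd, _, hcomp2⟩ := hsp
      have he : T t f - T σ hstar = T σ (T d f - hstar) := by
        rw [hcomp2, ContinuousLinearMap.comp_apply, map_sub]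
      rw [he]
      calc ‖(T σ (T d f - hstar))⁻‖ ≤ ‖T σ ((T d f - hstar)⁻)‖ :=
            norm_mono_nonneg (negPart_nonneg _) (op_negPart_le (hpos σ hσ) _)
        _ = ‖(T d f - hstar)⁻‖ := hmark σ hσ _ (negPart_nonneg _)
        _ ≤ η := hD d hDd
    have hle : T σ hstar ≤ hstar := hstar_max _ hmem
    have h3 : ‖hstar - T σ hstar‖ = ‖hstar‖ - ‖T σ hstar‖ := norm_sub_of_le' hAL hmem.1 hle
    rw [hmark σ hσ _ hstarL.1, sub_self] at h3
    have h4 := norm_le_zero_iff.1 h3.le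
    rw [sub_eq_zero] at h4
    exact h4.symm
  -- main claim : β = 1
  have hβeq : β = 1 := by
    by_contra hne
    have hblt : β < 1 := lt_of_le_of_ne hβ1 hne
    set c : ℝ := 1 - β with hcdef
    have hcpos : 0 < c := by rw [hcdef]; linarith
    have hsel : ∀ j : ℕ, ∃ s, Pr s ∧ ‖(T s f - hstar)⁻‖ ≤ (1/2) ^ j := by
      intro j
      exact (hP.and ((hLiff hstar).1 hstarL.2 ((1/2)^j) (by positivity))).exists
    choose sj hsjP hsj using hsel
    set u : ℕ → E := fun j => (T (sj j) f - hstar)⁺ with hudef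
    set e : ℕ → E := fun j => (T (sj j) f - hstar)⁻ with hedef
    have hphi : ∀ j, ‖u j‖ + ‖hstar‖ = ‖e j‖ + ‖T (sj j) f‖ :=
      fun j => phi_eq hAL _ _ (hpos _ (hsjP j) f hf0) hstarL.1
    have hAn : ∀ j, ‖T (sj j) f‖ = 1 := fun j => by rw [hmark _ (hsjP j) f hf0, hf1]
    have hunorm : ∀ j, ‖u j‖ = 1 - β + ‖e j‖ := by
      intro j
      have h1 := hphi j
      rw [hAn j, hstar_norm] at h1
      linarith
    have hupos : ∀ j, c ≤ ‖u j‖ := by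
      intro j
      rw [hunorm j, hcdef]
      have := norm_nonneg (e j)
      linarith
    have hune : ∀ j, ‖u j‖ ≠ 0 := fun j => ne_of_gt (lt_of_lt_of_le hcpos (hupos j))
    have hk : ∀ j : ℕ, ∃ k : E, 0 ≤ k ∧ ε * c ≤ ‖k‖ ∧
        Tendsto (fun d => ‖(T d (u j) - k)⁻‖) atTop (𝓝 0) := by
      intro j
      set w : E := ‖u j‖⁻¹ • u j with hwdef
      have hw0 : 0 ≤ w := smul_nonneg'' (by positivity) (posPart_nonneg _)
      have hw1 : ‖w‖ = 1 := by
        rw [hwdef, norm_smul, norm_inv, Real.norm_eq_abs, abs_of_nonneg (norm_nonneg _),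
          inv_mul_cancel₀ (hune j)]
      obtain ⟨k', hk'0, hk'ε, hk't⟩ := hlb w hw0 hw1
      have huw : u j = ‖u j‖ • w := by
        rw [hwdef, smul_smul, mul_inv_cancel₀ (hune j), one_smul]
      refine ⟨‖u j‖ • k', smul_nonneg'' (norm_nonneg _) hk'0, ?_, ?_⟩
      · rw [norm_smul, Real.norm_eq_abs, abs_of_nonneg (norm_nonneg _)]
        calc ε * c = c * ε := mul_comm _ _
          _ ≤ ‖u j‖ * ‖k'‖ := mul_le_mul (hupos j) hk'ε hε.le (norm_nonneg _)
      · have hid : ∀ d, ‖(T d (u j) - ‖u j‖ • k')⁻‖ = ‖u j‖ * ‖(T d w - k')⁻‖ := by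
          intro d
          have h5 : T d (u j) - ‖u j‖ • k' = ‖u j‖ • (T d w - k') := by
            rw [smul_sub, ← map_smul, ← huw]
          rw [h5, negPart_smul' (norm_nonneg _), norm_smul, Real.norm_eq_abs,
            abs_of_nonneg (norm_nonneg _)]
        simp_rw [hid]
        have h6 := hk't.const_mul ‖u j‖
        simpa using h6
    choose k hk0 hknorm hkt using hk
    have htail : ∀ j : ℕ, ∀ η > (0:ℝ), ∀ᶠ t in atTop,
        ‖(T t f - (hstar + k j))⁻‖ ≤ (1/2)^j + η := by
      intro j η hη
      obtain ⟨D, hD⟩ := eventually_atTop.1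
        ((tendsto_zero_iff_ev (fun d => norm_nonneg _)).1 (hkt j) η hη)
      filter_upwards [hsplit (sj j) (hsjP j) D] with t hsp
      obtain ⟨d, hd, hDd, hcomp1, _⟩ := hsp
      have h1 : T (sj j) f = hstar + (u j - e j) := by
        have h2 := posPart_sub_negPart (T (sj j) f - hstar)
        rw [hudef, hedef]
        rw [h2]
        abel
      have hdecomp : T t f - (hstar + k j) = (T d (u j) - k j) - T d (e j) := by
        calc T t f - (hstar + k j) = T d (T (sj j) f) - (hstar + k j) := by
              rw [hcomp1, ContinuousLinearMap.comp_apply]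
          _ = T d hstar + (T d (u j) - T d (e j)) - (hstar + k j) := by
              rw [h1, map_add, map_sub]
          _ = (T d (u j) - k j) - T d (e j) := by rw [hfix d hd]; abel
      rw [hdecomp]
      have hnp : ((T d (u j) - k j) - T d (e j))⁻ ≤ (T d (u j) - k j)⁻ + T d (e j) := by
        have h5 := negPart_add_le' (T d (u j) - k j) (- T d (e j))
        rw [← sub_eq_add_neg] at h5
        have h6 : (- T d (e j))⁻ = T d (e j) := by
          rw [negPart_neg, posPart_eq_self.2 (hpos d hd _ (negPart_nonneg _))]
        rwa [h6] at h5
      calc ‖((T d (u j) - k j) - T d (e j))⁻‖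
          ≤ ‖(T d (u j) - k j)⁻ + T d (e j)‖ := norm_mono_nonneg (negPart_nonneg _) hnp
        _ ≤ ‖(T d (u j) - k j)⁻‖ + ‖T d (e j)‖ := norm_add_le _ _
        _ ≤ (1/2)^j + η := by
            have h7 : ‖T d (e j)‖ = ‖e j‖ := hmark d hd _ (negPart_nonneg _)
            have h8 := hD d hDd
            have h9 := hsj j
            rw [h7]
            rw [hedef]
            linarith
    -- chain suprema
    set V : ℕ → ℕ → E := fun m n =>
      Nat.rec (hstar + k m) (fun i ih => ih ⊔ (hstar + k (m + i + 1))) n with hVdefn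
    have hVsucc : ∀ m n, V m (n+1) = V m n ⊔ (hstar + k (m + n + 1)) := fun m n => rfl
    have hV0 : ∀ m n, 0 ≤ V m n := by
      intro m n
      induction n with
      | zero => exact add_nonneg hstarL.1 (hk0 m)
      | succ i ih => exact le_trans ih le_sup_left
    have hVmono : ∀ m, Monotone (V m) := fun m => monotone_nat_of_le_succ fun n => le_sup_left
    have hVdef : ∀ m n, ∀ η > (0:ℝ), ∀ᶠ t in atTop,
        ‖(T t f - V m n)⁻‖ ≤ 2 * (1/2)^m - (1/2)^(m+n) + η := by
      intro m n
      induction n with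
      | zero =>
          intro η hη
          filter_upwards [htail m η hη] with t ht
          have : (2:ℝ) * (1/2)^m - (1/2)^(m+0) = (1/2)^m := by
            rw [Nat.add_zero]; ring
          rw [this]
          exact ht
      | succ i ih =>
          intro η hη
          filter_upwards [ih (η/2) (by linarith), htail (m+i+1) (η/2) (by linarith)] with t h1 h2
          rw [hVsucc m i]
          have h3 := negPart_sub_sup_le' (T t f) (V m i) (hstar + k (m + i + 1))
          have h4 : ‖(T t f - V m i ⊔ (hstar + k (m+i+1)))⁻‖ ≤
              ‖(T t f - V m i)⁻‖ + ‖(T t f - (hstar + k (m+i+1)))⁻‖ :=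
            (norm_mono_nonneg (negPart_nonneg _) h3).trans (norm_add_le _ _)
          have h5 : ((1:ℝ)/2)^(m+(i+1)) = (1/2)^(m+i) * (1/2) := by
            rw [← pow_succ]
            congr 1
          have h6 : ((1:ℝ)/2)^(m+i+1) = (1/2)^(m+i) * (1/2) := by rw [← pow_succ]
          calc ‖(T t f - V m i ⊔ (hstar + k (m+i+1)))⁻‖
              ≤ ‖(T t f - V m i)⁻‖ + ‖(T t f - (hstar + k (m+i+1)))⁻‖ := h4
            _ ≤ (2 * (1/2)^m - (1/2)^(m+i) + η/2) + ((1/2)^(m+i+1) + η/2) := by linarith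
            _ ≤ 2 * (1/2)^m - (1/2)^(m+(i+1)) + η := by rw [h5, h6]; linarith
    have hVnormle : ∀ m n, ‖V m n‖ ≤ 4 := by
      intro m n
      obtain ⟨t, ht1, ht2⟩ := (hA1.and (hVdef m n 1 one_pos)).exists
      have h1 := hbound (V m n) (hV0 m n) _ ⟨t, ht1, ht2⟩
      have h2 : ((1:ℝ)/2)^m ≤ 1 := by
        apply pow_le_one₀ <;> norm_num
      have h3 : (0:ℝ) ≤ (1/2)^(m+n) := by positivity
      linarith
    have hZex : ∀ m : ℕ, ∃ z, Tendsto (V m) atTop (𝓝 z) := fun m =>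
      exists_tendsto_monotone hAL (hV0 m) (hVmono m) (fun n => hVnormle m n)
    choose Z hZt using hZex
    have hZ0 : ∀ m, 0 ≤ Z m :=
      fun m => ge_of_tendsto (hZt m) (Eventually.of_forall fun n => hV0 m n)
    have hZfirst : ∀ m, hstar + k m ≤ Z m := by
      intro m
      refine ge_of_tendsto (hZt m) (Eventually.of_forall fun n => ?_)
      exact hVmono m (Nat.zero_le n)
    have hZnorm : ∀ m, β + ε * c ≤ ‖Z m‖ := by
      intro m
      have h1 : ‖hstar + k m‖ = ‖hstar‖ + ‖k m‖ := hAL _ _ hstarL.1 (hk0 m)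
      have h2 : ‖hstar + k m‖ ≤ ‖Z m‖ :=
        norm_mono_nonneg (add_nonneg hstarL.1 (hk0 m)) (hZfirst m)
      have h3 := hknorm m
      rw [h1, hstar_norm] at h2
      linarith
    have hZdefect : ∀ m, ∀ η > (0:ℝ), ∀ᶠ t in atTop,
        ‖(T t f - Z m)⁻‖ ≤ 2*(1/2)^m + η := by
      intro m η hη
      obtain ⟨N, hN⟩ := Metric.tendsto_atTop.1 (hZt m) (η/2) (by linarith)
      have hNd : ‖V m N - Z m‖ ≤ η/2 := by
        have := hN N (le_refl N)
        rw [dist_eq_norm] at this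
        linarith
      filter_upwards [hVdef m N (η/2) (by linarith)] with t ht
      have h1 := hLlip (V m N) (Z m) t
      have h3 : (0:ℝ) ≤ (1/2)^(m+N) := by positivity
      linarith
    have hVshift : ∀ m n, V (m+1) n ≤ V m (n+1) := by
      intro m n
      induction n with
      | zero =>
          have h1 : hstar + k (m+1) ≤ V m 0 ⊔ (hstar + k (m + 0 + 1)) := by
            have h2 : m + 0 + 1 = m + 1 := by ring
            rw [h2]
            exact le_sup_right
          exact h1
      | succ i ih =>
          have harith : m + 1 + i + 1 = m + (i + 1) + 1 := by ring
          calc V (m+1) (i+1) = V (m+1) i ⊔ (hstar + k (m+1+i+1)) := rfl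
            _ ≤ V m (i+1) ⊔ (hstar + k (m+(i+1)+1)) := by
                rw [harith]
                exact sup_le_sup_right ih _
            _ = V m (i+1+1) := rfl
    have hZanti : Antitone Z := by
      refine antitone_nat_of_succ_le fun m => ?_
      have h1 : Tendsto (fun n => V m (n+1)) atTop (𝓝 (Z m)) :=
        (hZt m).comp (tendsto_add_atTop_nat 1)
      exact le_of_tendsto_of_tendsto (hZt (m+1)) h1 (Eventually.of_forall fun n => hVshift m n)
    obtain ⟨Zi, hZit⟩ := exists_tendsto_antitone hAL hZ0 hZanti
    have hZi0 : 0 ≤ Zi := ge_of_tendsto hZit (Eventually.of_forall hZ0)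
    have hZiL : Zi ∈ L := by
      refine ⟨hZi0, (hLiff _).2 fun η hη => ?_⟩
      obtain ⟨m1, hm1⟩ : ∃ m1 : ℕ, ((1:ℝ)/2)^m1 < η/6 :=
        exists_pow_lt_of_lt_one (by linarith) (by norm_num)
      obtain ⟨m2, hm2⟩ := Metric.tendsto_atTop.1 hZit (η/3) (by linarith)
      set m := max m1 m2 with hmdef
      have hd1 : ((1:ℝ)/2)^m ≤ (1/2)^m1 :=
        pow_le_pow_of_le_one (by norm_num) (by norm_num) (le_max_left _ _)
      have hd2 : ‖Z m - Zi‖ ≤ η/3 := by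
        have := hm2 m (le_max_right _ _)
        rw [dist_eq_norm] at this
        linarith
      filter_upwards [hZdefect m (η/6) (by linarith)] with t ht
      have h1 := hLlip (Z m) Zi t
      linarith
    have h8 : ‖Zi‖ ≤ β := by
      rw [← hstar_norm]
      exact norm_mono_nonneg hZi0 (hstar_max _ hZiL)
    have h9 : β + ε * c ≤ ‖Zi‖ :=
      ge_of_tendsto hZit.norm (Eventually.of_forall fun m => hZnorm m)
    nlinarith [mul_pos hε hcpos]
  -- conclude convergence of the orbit
  refine ⟨hstar, ?_⟩
  rw [tendsto_iff_norm_sub_tendsto_zero]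
  rw [tendsto_zero_iff_ev (fun t => norm_nonneg _)]
  intro η hη
  filter_upwards [hA1, hP, (hLiff hstar).1 hstarL.2 (η/3) (by linarith)] with t h1 h2 h3
  have hphi2 := phi_eq hAL (T t f) hstar (hpos t h2 f hf0) hstarL.1
  rw [h1, hstar_norm, hβeq] at hphi2
  have hdec : T t f - hstar = (T t f - hstar)⁺ - (T t f - hstar)⁻ :=
    (posPart_sub_negPart _).symm
  calc ‖T t f - hstar‖ = ‖(T t f - hstar)⁺ - (T t f - hstar)⁻‖ := by rw [← hdec]
    _ ≤ ‖(T t f - hstar)⁺‖ + ‖(T t f - hstar)⁻‖ := norm_sub_le _ _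
    _ ≤ η := by linarith

end Core
section Wrap

variable {E : Type*} [NormedAddCommGroup E] [Lattice E] [HasSolidNorm E] [IsOrderedAddMonoid E] [NormedSpace ℝ E] [CompleteSpace E]
variable {ι : Type*} [SemilatticeSup ι] [Nonempty ι]

private theorem core_converge
    (hAL : ∀ f g : E, 0 ≤ f → 0 ≤ g → ‖f + g‖ = ‖f‖ + ‖g‖)
    (T : ι → E →L[ℝ] E) (Pr : ι → Prop)
    (hP : ∀ᶠ t in atTop, Pr t)
    (hsplit : ∀ s, Pr s → ∀ D : ι, ∀ᶠ t in atTop, ∃ d, Pr d ∧ D ≤ d ∧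
        T t = (T d).comp (T s) ∧ T t = (T s).comp (T d))
    (hpos : ∀ t, Pr t → ∀ x : E, 0 ≤ x → 0 ≤ T t x)
    (hmark : ∀ t, Pr t → ∀ x : E, 0 ≤ x → ‖T t x‖ = ‖x‖)
    (ε : ℝ) (hε : 0 < ε)
    (hlb : ∀ f : E, 0 ≤ f → ‖f‖ = 1 → ∃ h : E, 0 ≤ h ∧ ε ≤ ‖h‖ ∧
        Tendsto (fun t => ‖(T t f - h)⁻‖) atTop (𝓝 0)) :
    ∃ Pop : E →L[ℝ] E, ∀ x : E, Tendsto (fun t => T t x) atTop (𝓝 (Pop x)) := by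
  have keypos : ∀ x : E, 0 ≤ x → ∃ y, Tendsto (fun t => T t x) atTop (𝓝 y) := by
    intro x hx
    rcases eq_or_ne x 0 with rfl | hne
    · exact ⟨0, by simpa using (tendsto_const_nhds : Tendsto (fun _ : ι => (0:E)) atTop (𝓝 0))⟩
    · have hxn : ‖x‖ ≠ 0 := by simpa using hne
      set w : E := ‖x‖⁻¹ • x with hwdef
      have hw0 : 0 ≤ w := smul_nonneg'' (by positivity) hx
      have hw1 : ‖w‖ = 1 := by
        rw [hwdef, norm_smul, norm_inv, Real.norm_eq_abs, abs_of_nonneg (norm_nonneg _),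
          inv_mul_cancel₀ hxn]
      obtain ⟨y, hy⟩ := core_orbit hAL T Pr hP hsplit hpos hmark ε hε hlb w hw0 hw1
      refine ⟨‖x‖ • y, ?_⟩
      have h1 : ∀ t, T t x = ‖x‖ • T t w := by
        intro t
        rw [hwdef, map_smul, smul_smul, mul_inv_cancel₀ hxn, one_smul]
      simp_rw [h1]
      exact hy.const_smul ‖x‖
  have key : ∀ x : E, ∃ y, Tendsto (fun t => T t x) atTop (𝓝 y) := by
    intro x
    obtain ⟨y1, hy1⟩ := keypos x⁺ (posPart_nonneg x)
    obtain ⟨y2, hy2⟩ := keypos x⁻ (negPart_nonneg x)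
    refine ⟨y1 - y2, ?_⟩
    have h1 : ∀ t, T t x = T t x⁺ - T t x⁻ := by
      intro t
      rw [← map_sub, posPart_sub_negPart]
    simp_rw [h1]
    exact hy1.sub hy2
  choose limf hlim using key
  have hbound2 : ∀ x, ‖limf x‖ ≤ ‖x‖ := by
    intro x
    refine le_of_tendsto (hlim x).norm ?_
    filter_upwards [hP] with t ht
    exact op_norm_le (hpos t ht) (hmark t ht) x
  have hadd : ∀ x y, limf (x + y) = limf x + limf y := by
    intro x y
    refine tendsto_nhds_unique ?_ ((hlim x).add (hlim y))
    have h1 : ∀ t : ι, T t (x + y) = T t x + T t y := fun t => map_add _ _ _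
    have h2 := hlim (x + y)
    simp_rw [h1] at h2
    exact h2
  have hsmul : ∀ (c : ℝ) (x : E), limf (c • x) = c • limf x := by
    intro c x
    refine tendsto_nhds_unique ?_ ((hlim x).const_smul c)
    have h1 : ∀ t : ι, T t (c • x) = c • T t x := fun t => map_smul _ _ _
    have h2 := hlim (c • x)
    simp_rw [h1] at h2
    exact h2
  let Pl : E →ₗ[ℝ] E :=
    { toFun := limf, map_add' := hadd, map_smul' := hsmul }
  refine ⟨Pl.mkContinuous 1 (fun x => by rw [one_mul]; exact hbound2 x), fun x => hlim x⟩

private theorem core_lb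
    (T : ι → E →L[ℝ] E) (Pr : ι → Prop)
    (hP : ∀ᶠ t in atTop, Pr t)
    (hpos : ∀ t, Pr t → ∀ x : E, 0 ≤ x → 0 ≤ T t x)
    (hmark : ∀ t, Pr t → ∀ x : E, 0 ≤ x → ‖T t x‖ = ‖x‖)
    (Pop : E →L[ℝ] E) (hconv : ∀ x : E, Tendsto (fun t => T t x) atTop (𝓝 (Pop x))) :
    ∃ ε > (0:ℝ), ∀ f : E, 0 ≤ f → ‖f‖ = 1 → ∃ h : E, 0 ≤ h ∧ ε ≤ ‖h‖ ∧
      Tendsto (fun t => ‖(T t f - h)⁻‖) atTop (𝓝 0) := by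
  refine ⟨1, one_pos, fun f hf0 hf1 => ⟨Pop f, ?_, ?_, ?_⟩⟩
  · exact ge_of_tendsto (hconv f) (hP.mono fun t ht => hpos t ht f hf0)
  · have h1 : Tendsto (fun t => ‖T t f‖) atTop (𝓝 ‖Pop f‖) := (hconv f).norm
    have h2 : Tendsto (fun t => ‖T t f‖) atTop (𝓝 1) := by
      refine Tendsto.congr' ?_ (tendsto_const_nhds : Tendsto (fun _ : ι => (1:ℝ)) atTop _)
      filter_upwards [hP] with t ht
      rw [hmark t ht f hf0, hf1]
    exact (tendsto_nhds_unique h1 h2).ge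
  · have h1 : Tendsto (fun t => T t f - Pop f) atTop (𝓝 0) := by
      have := (hconv f).sub (tendsto_const_nhds : Tendsto (fun _ : ι => Pop f) atTop _)
      simpa using this
    have h2 : Tendsto (fun t => ‖T t f - Pop f‖) atTop (𝓝 0) := by
      simpa using h1.norm
    refine squeeze_zero (fun t => norm_nonneg _) (fun t => ?_) h2
    have h3 := norm_negPart_sub_le' (T t f - Pop f) 0
    simpa using h3

end Wrap
/-- A Markov semigroup on an AL-space converges strongly if and only if every normalised
positive vector `f` admits an individual lower bound `h_f` with `inf_f ‖h_f‖ > 0`.  Both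
the time-discrete case `J = ℕ` and the case `J = (0,∞)` are covered. -/
theorem markov_semigroup_convergence_iff_individual_lower_bounds
    {E : Type*} [NormedAddCommGroup E] [Lattice E] [HasSolidNorm E] [IsOrderedAddMonoid E] [NormedSpace ℝ E] [CompleteSpace E]
    (hAL : ∀ f g : E, 0 ≤ f → 0 ≤ g → ‖f + g‖ = ‖f‖ + ‖g‖) :
    -- the time-discrete case `J = ℕ`
    (∀ S : E →L[ℝ] E,
      (∀ f : E, 0 ≤ f → 0 ≤ S f) → (∀ f : E, 0 ≤ f → ‖S f‖ = ‖f‖) →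
      ((∃ P : E →L[ℝ] E, ∀ f : E, Tendsto (fun n : ℕ => (S ^ n) f) atTop (𝓝 (P f))) ↔
        (∃ ε > (0:ℝ), ∀ f : E, 0 ≤ f → ‖f‖ = 1 →
          ∃ h : E, 0 ≤ h ∧ ε ≤ ‖h‖ ∧
            Tendsto (fun n : ℕ => ‖((S ^ n) f - h)⁻‖) atTop (𝓝 0)))) ∧
    -- the case `J = (0, ∞)`
    (∀ T : ℝ → E →L[ℝ] E,
      (∀ s t : ℝ, 0 < s → 0 < t → T (s + t) = (T s).comp (T t)) →
      (∀ t : ℝ, 0 < t → ∀ f : E, 0 ≤ f → 0 ≤ T t f) →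
      (∀ t : ℝ, 0 < t → ∀ f : E, 0 ≤ f → ‖T t f‖ = ‖f‖) →
      ((∃ P : E →L[ℝ] E, ∀ f : E, Tendsto (fun t : ℝ => T t f) atTop (𝓝 (P f))) ↔
        (∃ ε > (0:ℝ), ∀ f : E, 0 ≤ f → ‖f‖ = 1 →
          ∃ h : E, 0 ≤ h ∧ ε ≤ ‖h‖ ∧
            Tendsto (fun t : ℝ => ‖(T t f - h)⁻‖) atTop (𝓝 0)))) := by
  constructor
  · -- discrete case
    intro S hSpos hSmark
    have hposn : ∀ n : ℕ, ∀ x : E, 0 ≤ x → 0 ≤ (S ^ n) x := by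
      intro n
      induction n with
      | zero => intro x hx; simpa using hx
      | succ m ih =>
          intro x hx
          rw [pow_succ, ContinuousLinearMap.mul_apply]
          exact ih _ (hSpos x hx)
    have hmarkn : ∀ n : ℕ, ∀ x : E, 0 ≤ x → ‖(S ^ n) x‖ = ‖x‖ := by
      intro n
      induction n with
      | zero => intro x _; simp
      | succ m ih =>
          intro x hx
          rw [pow_succ, ContinuousLinearMap.mul_apply, ih _ (hSpos x hx), hSmark x hx]
    have hsplitn : ∀ s : ℕ, True → ∀ D : ℕ, ∀ᶠ t in atTop, ∃ d, True ∧ D ≤ d ∧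
        (S ^ t) = (S ^ d).comp (S ^ s) ∧ (S ^ t) = (S ^ s).comp (S ^ d) := by
      intro s _ D
      rw [eventually_atTop]
      refine ⟨s + D, fun t ht => ⟨t - s, trivial, by omega, ?_, ?_⟩⟩
      · rw [← ContinuousLinearMap.mul_def, ← pow_add]
        congr 1
        omega
      · rw [← ContinuousLinearMap.mul_def, ← pow_add]
        congr 1
        omega
    constructor
    · rintro ⟨P, hPc⟩
      exact core_lb (fun n : ℕ => S ^ n) (fun _ => True)
        (Eventually.of_forall fun _ => trivial)
        (fun t _ => hposn t) (fun t _ => hmarkn t) P hPc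
    · rintro ⟨ε, hε, hlb⟩
      exact core_converge hAL (fun n : ℕ => S ^ n) (fun _ => True)
        (Eventually.of_forall fun _ => trivial) hsplitn
        (fun t _ => hposn t) (fun t _ => hmarkn t) ε hε hlb
  · -- continuous case
    intro T hsem hTpos hTmark
    have hPr : ∀ᶠ t : ℝ in atTop, 0 < t := eventually_gt_atTop 0
    have hsplitr : ∀ s : ℝ, 0 < s → ∀ D : ℝ, ∀ᶠ t in atTop, ∃ d, 0 < d ∧ D ≤ d ∧
        T t = (T d).comp (T s) ∧ T t = (T s).comp (T d) := by
      intro s hs D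
      rw [eventually_atTop]
      refine ⟨max D 1 + s, fun t ht => ?_⟩
      have h1 : D ≤ max D 1 := le_max_left _ _
      have h2 : (1:ℝ) ≤ max D 1 := le_max_right _ _
      have hd0 : 0 < t - s := by linarith
      refine ⟨t - s, hd0, by linarith, ?_, ?_⟩
      · have h3 : T t = T ((t - s) + s) := by norm_num
        rw [h3, hsem (t - s) s hd0 hs]
      · have h3 : T t = T (s + (t - s)) := by norm_num
        rw [h3, hsem s (t - s) hs hd0]
    constructor
    · rintro ⟨P, hPc⟩
      exact core_lb T (fun t : ℝ => 0 < t) hPr hTpos hTmark P hPc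
    · rintro ⟨ε, hε, hlb⟩
      exact core_converge hAL T (fun t : ℝ => 0 < t) hPr hsplitr hTpos hTmark ε hε hlb
end

section
/- Let E be a Banach lattice and (T_t)_{t∈J} a semigroup on E (J = ℕ or (0,∞)) consisting of lattice homomorphisms. If (T_t) converges strongly to an operator P satisfying Pf > 0 for all f > 0, then T_t = id_E for all t ∈ J. -/
open Filter Topology

private theorem ker_triv_aux
    {E : Type*} [NormedAddCommGroup E] [Lattice E] [HasSolidNorm E]
      [IsOrderedAddMonoid E] [NormedSpace ℝ E]
    (P : E →L[ℝ] E) (hlat : ∀ f g : E, P (f ⊔ g) = P f ⊔ P g)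
    (hpos : ∀ f : E, 0 < f → 0 < P f) : ∀ h : E, P h = 0 → h = 0 := by
  intro h hh
  have hPabs : P |h| = 0 := by
    have e : |h| = h ⊔ -h := rfl
    rw [e, hlat, map_neg, hh, neg_zero, sup_idem]
  by_contra hne
  have habs : 0 < |h| := by
    refine lt_of_le_of_ne (abs_nonneg h) fun heq => hne ?_
    have e : |h| = h ⊔ -h := rfl
    have h1 : h ≤ 0 := by rw [heq, e]; exact le_sup_left
    have h2 : -h ≤ 0 := by rw [heq, e]; exact le_sup_right
    exact le_antisymm h1 (neg_nonpos.mp h2)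
  exact absurd hPabs (ne_of_gt (hpos _ habs))

/-- If a semigroup of lattice homomorphisms on a Banach lattice converges strongly to an
operator `P` with `Pf > 0` for every `f > 0`, then every semigroup operator is the
identity.  Both the time-discrete case `J = ℕ` and the case `J = (0,∞)` are covered. -/
theorem semigroup_of_latticeHoms_is_identity
    {E : Type*} [NormedAddCommGroup E] [Lattice E] [HasSolidNorm E]
      [IsOrderedAddMonoid E] [NormedSpace ℝ E] [CompleteSpace E] :
    -- the time-discrete case `J = ℕ`
    (∀ S : E →L[ℝ] E,
      (∀ f g : E, S (f ⊔ g) = S f ⊔ S g) →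
      (∀ P : E →L[ℝ] E,
        (∀ f : E, Tendsto (fun n : ℕ => (S ^ n) f) atTop (𝓝 (P f))) →
        (∀ f : E, 0 < f → 0 < P f) →
        S = ContinuousLinearMap.id ℝ E)) ∧
    -- the case `J = (0, ∞)`
    (∀ T : ℝ → E →L[ℝ] E,
      (∀ s t : ℝ, 0 < s → 0 < t → T (s + t) = (T s).comp (T t)) →
      (∀ t : ℝ, 0 < t → ∀ f g : E, T t (f ⊔ g) = T t f ⊔ T t g) →
      (∀ P : E →L[ℝ] E,
        (∀ f : E, Tendsto (fun t : ℝ => T t f) atTop (𝓝 (P f))) →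
        (∀ f : E, 0 < f → 0 < P f) →
        ∀ t : ℝ, 0 < t → T t = ContinuousLinearMap.id ℝ E)) := by
  constructor
  · -- discrete case
    intro S hS P hP hpos
    have hpow : ∀ (n : ℕ) (a b : E), (S ^ n) (a ⊔ b) = (S ^ n) a ⊔ (S ^ n) b := by
      intro n
      induction n with
      | zero => intro a b; simp
      | succ n ih =>
        intro a b
        simp only [pow_succ, ContinuousLinearMap.mul_apply, ih, hS]
    have hPlat : ∀ f g : E, P (f ⊔ g) = P f ⊔ P g := by
      intro f g
      refine tendsto_nhds_unique (hP (f ⊔ g)) ?_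
      have := (hP f).sup_nhds (hP g)
      simpa [hpow] using this
    have hPS : ∀ f : E, P (S f) = P f := by
      intro f
      refine tendsto_nhds_unique (hP (S f)) ?_
      have h2 : Tendsto (fun n : ℕ => (S ^ (n + 1)) f) atTop (𝓝 (P f)) :=
        (hP f).comp (tendsto_add_atTop_nat 1)
      simpa [pow_succ, ContinuousLinearMap.mul_apply] using h2
    ext f
    have hker : P (f - S f) = 0 := by rw [map_sub, hPS, sub_self]
    have := ker_triv_aux P hPlat hpos _ hker
    have := sub_eq_zero.mp this
    simp [this.symm]
  · -- continuous case
    intro T hT hTlat P hP hpos t ht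
    have hPlat : ∀ f g : E, P (f ⊔ g) = P f ⊔ P g := by
      intro f g
      refine tendsto_nhds_unique (hP (f ⊔ g)) ?_
      have h2 : Tendsto (fun s : ℝ => T s f ⊔ T s g) atTop (𝓝 (P f ⊔ P g)) :=
        (hP f).sup_nhds (hP g)
      refine h2.congr' ?_
      filter_upwards [eventually_gt_atTop (0 : ℝ)] with s hs
      exact (hTlat s hs f g).symm
    have hPT : ∀ f : E, P (T t f) = P f := by
      intro f
      refine tendsto_nhds_unique (hP (T t f)) ?_
      have h2 : Tendsto (fun s : ℝ => T (s + t) f) atTop (𝓝 (P f)) :=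
        (hP f).comp (tendsto_atTop_add_const_right atTop t tendsto_id)
      refine Tendsto.congr' ?_ h2
      filter_upwards [eventually_gt_atTop (0 : ℝ)] with s hs
      rw [hT s t hs ht]
      rfl
    ext f
    have hker : P (f - T t f) = 0 := by rw [map_sub, hPT, sub_self]
    have := ker_triv_aux P hPlat hpos _ hker
    have := sub_eq_zero.mp this
    simp [this.symm]
end

section
/- Let (Ω,μ) be a finite measure space, J = ℕ or (0,∞), and for each t ∈ J let φ_t: Ω → Ω be measurable and measure-preserving with φ_{t+s} = φ_t ∘ φ_s. Let T_t be the Frobenius–Perron operator on L¹(Ω,μ) associated with φ_t. If (T_t)_{t∈J} converges in operator norm as t → ∞, then T_t = id for all t ∈ J. -/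
open Filter Topology MeasureTheory

section Helpers

variable {Ω : Type*} [MeasurableSpace Ω] {μ : Measure Ω} [IsFiniteMeasure μ]

/-- Two `L¹` functions with equal integrals over all measurable sets are equal. -/
private lemma L1_ext_of_setIntegral (f g : Lp ℝ 1 μ)
    (h : ∀ A : Set Ω, MeasurableSet A →
      ∫ x in A, (f : Ω → ℝ) x ∂μ = ∫ x in A, (g : Ω → ℝ) x ∂μ) : f = g := by
  refine Lp.ext (Lp.ae_eq_of_forall_setIntegral_eq f g one_ne_zero ENNReal.one_ne_top
    (fun s hs _ => (L1.integrable_coeFn f).integrableOn)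
    (fun s hs _ => (L1.integrable_coeFn g).integrableOn)
    (fun s hs _ => h s hs))

/-- Change of variables for the Koopman operator. -/
private lemma setIntegral_koopman {φ : Ω → Ω} (hφ : MeasurePreserving φ μ μ)
    (f : Lp ℝ 1 μ) {A : Set Ω} (hA : MeasurableSet A) :
    ∫ x in φ ⁻¹' A, (Lp.compMeasurePreserving φ hφ f : Ω → ℝ) x ∂μ
      = ∫ x in A, (f : Ω → ℝ) x ∂μ := by
  have hae : (Lp.compMeasurePreserving φ hφ f : Ω → ℝ) =ᵐ[μ] (f : Ω → ℝ) ∘ φ :=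
    Lp.coeFn_compMeasurePreserving f hφ
  have h1 : ∫ x in φ ⁻¹' A, (Lp.compMeasurePreserving φ hφ f : Ω → ℝ) x ∂μ
      = ∫ x in φ ⁻¹' A, ((f : Ω → ℝ) ∘ φ) x ∂μ :=
    setIntegral_congr_ae (hA.preimage hφ.measurable) (hae.mono fun x hx _ => hx)
  have hfm : AEStronglyMeasurable (f : Ω → ℝ) (Measure.map φ μ) := by
    rw [hφ.map_eq]; exact Lp.aestronglyMeasurable f
  have h2 : ∫ x in A, (f : Ω → ℝ) x ∂(Measure.map φ μ)
      = ∫ x in φ ⁻¹' A, (f : Ω → ℝ) (φ x) ∂μ :=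
    setIntegral_map hA hfm hφ.aemeasurable
  rw [h1]
  rw [hφ.map_eq] at h2
  exact h2.symm

/-- Abstract operator-theoretic core: a "semigroup" of operators, each having a
right inverse of norm at most one, which converges in operator norm, consists of
the identity only. -/
private lemma abstract_core {E : Type*} [NormedAddCommGroup E] [NormedSpace ℝ E]
    {ι : Type*} (l : Filter ι) [l.NeBot] (S : Set ι) (σ : ι → ι → ι)
    (T : ι → E →L[ℝ] E) (P : E →L[ℝ] E)
    (hmem : ∀ᶠ s in l, s ∈ S)
    (hT : Tendsto (fun t => ‖T t - P‖) l (𝓝 0))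
    (hshift : ∀ t ∈ S, Tendsto (fun s => σ s t) l l)
    (hsemi : ∀ s ∈ S, ∀ t ∈ S, T (σ s t) = T s * T t)
    (hK : ∀ t ∈ S, ∃ K : E →L[ℝ] E, ‖K‖ ≤ 1 ∧ T t * K = 1) :
    ∀ t ∈ S, T t = ContinuousLinearMap.id ℝ E := by
  have hT' : Tendsto T l (𝓝 P) := by
    rwa [tendsto_iff_norm_sub_tendsto_zero]
  -- Step 1 : P = 1
  have hPid : P = 1 := by
    have hub : ∀ᶠ t in l, ‖(1 : E →L[ℝ] E) - P‖ ≤ ‖T t - P‖ := by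
      filter_upwards [hmem] with t ht
      obtain ⟨K, hKnorm, hTK⟩ := hK t ht
      -- `P * K = P`
      have h1 : Tendsto (fun s => T (σ s t)) l (𝓝 P) := hT'.comp (hshift t ht)
      have h2 : Tendsto (fun s => T (σ s t) * K) l (𝓝 (P * K)) :=
        h1.mul tendsto_const_nhds
      have h3 : (fun s => T (σ s t) * K) =ᶠ[l] T := by
        filter_upwards [hmem] with s hs
        rw [hsemi s hs t ht, mul_assoc, hTK, mul_one]
      have hPK : P * K = P := tendsto_nhds_unique (Tendsto.congr' h3 h2) hT'
      have hdiff : (1 : E →L[ℝ] E) - P = (T t - P) * K := by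
        rw [sub_mul, hTK, hPK]
      calc ‖(1 : E →L[ℝ] E) - P‖ = ‖(T t - P) * K‖ := by rw [hdiff]
        _ ≤ ‖T t - P‖ * ‖K‖ := norm_mul_le _ _
        _ ≤ ‖T t - P‖ * 1 := by
            exact mul_le_mul_of_nonneg_left hKnorm (norm_nonneg _)
        _ = ‖T t - P‖ := mul_one _
    have h0 : ‖(1 : E →L[ℝ] E) - P‖ ≤ 0 := ge_of_tendsto hT hub
    have : (1 : E →L[ℝ] E) - P = 0 :=
      norm_eq_zero.mp (le_antisymm h0 (norm_nonneg _))
    have := sub_eq_zero.mp this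
    exact this.symm
  -- Step 2 : each `T t` equals the identity
  intro t ht
  have h1 : Tendsto (fun s => T (σ s t)) l (𝓝 P) := hT'.comp (hshift t ht)
  have h2 : (fun s => T (σ s t)) =ᶠ[l] (fun s => T s * T t) := by
    filter_upwards [hmem] with s hs
    exact hsemi s hs t ht
  have h3 : Tendsto (fun s => T s * T t) l (𝓝 (P * T t)) :=
    hT'.mul tendsto_const_nhds
  have : P * T t = P := tendsto_nhds_unique h3 (Tendsto.congr' h2 h1)
  rw [hPid, one_mul] at this
  rw [this]
  rfl

/-- The common argument for both time scales. -/
private lemma fp_core {ι : Type*} (l : Filter ι) [l.NeBot] (S : Set ι) (σ : ι → ι → ι)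
    (φ : ι → Ω → Ω) (T : ι → Lp ℝ 1 μ →L[ℝ] Lp ℝ 1 μ)
    (hmem : ∀ᶠ s in l, s ∈ S)
    (hshift : ∀ t ∈ S, Tendsto (fun s => σ s t) l l)
    (hσS : ∀ s ∈ S, ∀ t ∈ S, σ s t ∈ S)
    (hm : ∀ t ∈ S, MeasurePreserving (φ t) μ μ)
    (hφ : ∀ s ∈ S, ∀ t ∈ S, φ (σ s t) = φ s ∘ φ t)
    (hchar : ∀ t ∈ S, ∀ f : Lp ℝ 1 μ, ∀ A : Set Ω, MeasurableSet A →
      ∫ x in A, (T t f : Ω → ℝ) x ∂μ = ∫ x in (φ t) ⁻¹' A, (f : Ω → ℝ) x ∂μ)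
    (hconv : ∃ P : Lp ℝ 1 μ →L[ℝ] Lp ℝ 1 μ, Tendsto (fun t => ‖T t - P‖) l (𝓝 0)) :
    ∀ t ∈ S, T t = ContinuousLinearMap.id ℝ (Lp ℝ 1 μ) := by
  obtain ⟨P, hP⟩ := hconv
  refine abstract_core l S σ T P hmem hP hshift ?_ ?_
  · -- semigroup property
    intro s hs t ht
    refine ContinuousLinearMap.ext fun f => ?_
    refine L1_ext_of_setIntegral _ _ fun A hA => ?_
    have hBm : MeasurableSet ((φ s) ⁻¹' A) := hA.preimage (hm s hs).measurable
    calc ∫ x in A, (T (σ s t) f : Ω → ℝ) x ∂μ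
        = ∫ x in (φ (σ s t)) ⁻¹' A, (f : Ω → ℝ) x ∂μ := hchar _ (hσS s hs t ht) f A hA
      _ = ∫ x in (φ t) ⁻¹' ((φ s) ⁻¹' A), (f : Ω → ℝ) x ∂μ := by
          rw [hφ s hs t ht, Set.preimage_comp]
      _ = ∫ x in (φ s) ⁻¹' A, (T t f : Ω → ℝ) x ∂μ := (hchar t ht f _ hBm).symm
      _ = ∫ x in A, (T s (T t f) : Ω → ℝ) x ∂μ := (hchar s hs (T t f) A hA).symm
      _ = ∫ x in A, (((T s * T t) f) : Ω → ℝ) x ∂μ := rfl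
  · -- right inverse of norm ≤ 1 : the Koopman operator
    intro t ht
    haveI : Fact ((1 : ENNReal) ≤ 1) := ⟨le_rfl⟩
    refine ⟨(Lp.compMeasurePreservingₗᵢ (μ := μ) (μb := μ) ℝ (φ t)
      (hm t ht)).toContinuousLinearMap, LinearIsometry.norm_toContinuousLinearMap_le _, ?_⟩
    refine ContinuousLinearMap.ext fun f => ?_
    refine L1_ext_of_setIntegral _ _ fun A hA => ?_
    calc ∫ x in A, ((T t (Lp.compMeasurePreserving (φ t) (hm t ht) f)) : Ω → ℝ) x ∂μ
        = ∫ x in (φ t) ⁻¹' A,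
            (Lp.compMeasurePreserving (φ t) (hm t ht) f : Ω → ℝ) x ∂μ :=
          hchar t ht _ A hA
      _ = ∫ x in A, (f : Ω → ℝ) x ∂μ := setIntegral_koopman (hm t ht) f hA

end Helpers

/-- Let `(Ω, μ)` be a finite measure space and `(φ_t)_{t∈J}` a semigroup of
measure-preserving measurable maps, with associated Frobenius–Perron operators `T_t` on
`L¹(Ω, μ)` (characterised by `∫_A T_t f dμ = ∫_{φ_t⁻¹(A)} f dμ`).  If `(T_t)` converges
in operator norm as `t → ∞`, then `T_t = id` for all `t`.  Both the time-discrete case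
`J = ℕ` and the case `J = (0,∞)` are covered. -/
theorem frobenius_perron_norm_convergence_implies_identity
    {Ω : Type*} [MeasurableSpace Ω] (μ : Measure Ω) [IsFiniteMeasure μ] :
    -- the time-discrete case `J = ℕ`
    (∀ (φ : ℕ → Ω → Ω) (T : ℕ → Lp ℝ 1 μ →L[ℝ] Lp ℝ 1 μ),
      (∀ t : ℕ, 1 ≤ t → MeasurePreserving (φ t) μ μ) →
      (∀ s t : ℕ, 1 ≤ s → 1 ≤ t → φ (t + s) = φ t ∘ φ s) →
      (∀ t : ℕ, 1 ≤ t → ∀ f : Lp ℝ 1 μ, ∀ A : Set Ω, MeasurableSet A →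
        ∫ x in A, (T t f : Ω → ℝ) x ∂μ = ∫ x in (φ t) ⁻¹' A, (f : Ω → ℝ) x ∂μ) →
      (∃ P : Lp ℝ 1 μ →L[ℝ] Lp ℝ 1 μ,
        Tendsto (fun t : ℕ => ‖T t - P‖) atTop (𝓝 0)) →
      ∀ t : ℕ, 1 ≤ t → T t = ContinuousLinearMap.id ℝ (Lp ℝ 1 μ)) ∧
    -- the case `J = (0, ∞)`
    (∀ (φ : ℝ → Ω → Ω) (T : ℝ → Lp ℝ 1 μ →L[ℝ] Lp ℝ 1 μ),
      (∀ t : ℝ, 0 < t → MeasurePreserving (φ t) μ μ) →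
      (∀ s t : ℝ, 0 < s → 0 < t → φ (t + s) = φ t ∘ φ s) →
      (∀ t : ℝ, 0 < t → ∀ f : Lp ℝ 1 μ, ∀ A : Set Ω, MeasurableSet A →
        ∫ x in A, (T t f : Ω → ℝ) x ∂μ = ∫ x in (φ t) ⁻¹' A, (f : Ω → ℝ) x ∂μ) →
      (∃ P : Lp ℝ 1 μ →L[ℝ] Lp ℝ 1 μ,
        Tendsto (fun t : ℝ => ‖T t - P‖) atTop (𝓝 0)) →
      ∀ t : ℝ, 0 < t → T t = ContinuousLinearMap.id ℝ (Lp ℝ 1 μ)) := by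
  constructor
  · intro φ T hm hφ hchar hconv
    have := fp_core (μ := μ) atTop {t : ℕ | 1 ≤ t} (fun s t => s + t) φ T
      (eventually_ge_atTop 1)
      (fun t ht => tendsto_add_atTop_nat t)
      (fun s hs t ht => show 1 ≤ s + t from le_add_right hs)
      (fun t ht => hm t ht)
      (fun s hs t ht => hφ t s ht hs)
      (fun t ht => hchar t ht) hconv
    exact fun t ht => this t ht
  · intro φ T hm hφ hchar hconv
    have := fp_core (μ := μ) atTop {t : ℝ | 0 < t} (fun s t => s + t) φ T
      (eventually_gt_atTop 0)
      (fun t ht => tendsto_atTop_add_const_right atTop t tendsto_id)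
      (fun s hs t ht => show 0 < s + t from add_pos hs ht)
      (fun t ht => hm t ht)
      (fun s hs t ht => hφ t s ht hs)
      (fun t ht => hchar t ht) hconv
    exact fun t ht => this t ht
end
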